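/- Let C be a finitely complete centralic category in which regular epimorphisms are stable under binary products. Let q₁ : A → X and q₂ : B → Y be regular epimorphisms and let f : X → Z and g : Y → Z be morphisms. Then f commutes with g if and only if f ∘ q₁ commutes with g ∘ q₂. -/

import Mathlib

open CategoryTheory CategoryTheory.Limits

universe v u

/-- A pointed category with binary products is *centralic*. -/
def Centralic (C : Type u) [Category.{v} C] [HasZeroObject C] [HasZeroMorphisms C]
    [HasBinaryProducts C] : Prop :=
  ∀ ⦃X Y Z S : C⦄ (f : X ⨯ Y ⟶ Z) (x x' : S ⟶ X) (y : S ⟶ Y),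
    prod.lift x 0 ≫ f = prod.lift x' 0 ≫ f →
    prod.lift x y ≫ f = prod.lift x' y ≫ f

/-- `ρ : A ⨯ B ⟶ X` is a cooperator for `f : A ⟶ X` and `g : B ⟶ X`. -/
def IsCooperator {C : Type u} [Category.{v} C] [HasZeroObject C] [HasZeroMorphisms C]
    [HasBinaryProducts C] {A B X : C} (f : A ⟶ X) (g : B ⟶ X) (ρ : A ⨯ B ⟶ X) : Prop :=
  prod.lift (𝟙 A) 0 ≫ ρ = f ∧ prod.lift 0 (𝟙 B) ≫ ρ = g

/-- Two morphisms with common codomain commute if they admit a cooperator. -/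
def Commutes {C : Type u} [Category.{v} C] [HasZeroObject C] [HasZeroMorphisms C]
    [HasBinaryProducts C] {A B X : C} (f : A ⟶ X) (g : B ⟶ X) : Prop :=
  ∃ ρ : A ⨯ B ⟶ X, IsCooperator f g ρ

/-- A morphism `f : A ⟶ B` is central if it commutes with `𝟙 B`. -/
def Central {C : Type u} [Category.{v} C] [HasZeroObject C] [HasZeroMorphisms C]
    [HasBinaryProducts C] {A B : C} (f : A ⟶ B) : Prop :=
  Commutes f (𝟙 B)

/-- `q : X ⟶ Q` is a coequalizer of `u v : A ⟶ X`. -/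
def IsCoequalizerDiagram {C : Type u} [Category.{v} C] {A X Q : C}
    (u v : A ⟶ X) (q : X ⟶ Q) : Prop :=
  u ≫ q = v ≫ q ∧ ∀ ⦃Z : C⦄ (h : X ⟶ Z), u ≫ h = v ≫ h → ∃! t : Q ⟶ Z, q ≫ t = h

/-- A morphism is a regular epimorphism if it is the coequalizer of some pair. -/
def IsRegularEpimorphism {C : Type u} [Category.{v} C] {X Q : C} (q : X ⟶ Q) : Prop :=
  ∃ (A : C) (u v : A ⟶ X), IsCoequalizerDiagram u v q

/-- Regular epimorphisms are stable under binary products. -/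
def RegularEpisStableUnderProducts (C : Type u) [Category.{v} C] [HasBinaryProducts C] : Prop :=
  ∀ ⦃X₁ Q₁ X₂ Q₂ : C⦄ (q₁ : X₁ ⟶ Q₁) (q₂ : X₂ ⟶ Q₂),
    IsRegularEpimorphism q₁ → IsRegularEpimorphism q₂ →
    IsRegularEpimorphism (prod.map q₁ q₂)


theorem regEpi_epi {C : Type u} [Category.{v} C] {X Q : C} {q : X ⟶ Q}
    (hq : IsRegularEpimorphism q) {Z : C} (a b : Q ⟶ Z) (h : q ≫ a = q ≫ b) : a = b := by
  obtain ⟨W, u, v, huv, hcoeq⟩ := hq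
  obtain ⟨t, _, ht⟩ := hcoeq (q ≫ a) (by rw [← Category.assoc, ← Category.assoc, huv])
  exact (ht a rfl).trans (ht b h.symm).symm

theorem stmt11 (C : Type u) [Category.{v} C] [HasZeroObject C] [HasZeroMorphisms C]
    [HasFiniteLimits C] (hC : Centralic C)
    (hstab : RegularEpisStableUnderProducts C)
    {A B X Y Z : C} (q₁ : A ⟶ X) (q₂ : B ⟶ Y)
    (hq₁ : IsRegularEpimorphism q₁) (hq₂ : IsRegularEpimorphism q₂)
    (f : X ⟶ Z) (g : Y ⟶ Z) :
    Commutes f g ↔ Commutes (q₁ ≫ f) (q₂ ≫ g) := by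
  constructor
  · rintro ⟨ρ, h1, h2⟩
    refine ⟨prod.map q₁ q₂ ≫ ρ, ?_, ?_⟩
    · rw [← Category.assoc, prod.lift_map]
      simp only [Category.id_comp, zero_comp]
      rw [show prod.lift q₁ (0 : A ⟶ Y) = q₁ ≫ prod.lift (𝟙 X) 0 by
        rw [prod.comp_lift, Category.comp_id, comp_zero]]
      rw [Category.assoc, h1]
    · rw [← Category.assoc, prod.lift_map]
      simp only [Category.id_comp, zero_comp]
      rw [show prod.lift (0 : B ⟶ X) q₂ = q₂ ≫ prod.lift 0 (𝟙 Y) by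
        rw [prod.comp_lift, Category.comp_id, comp_zero]]
      rw [Category.assoc, h2]
  · rintro ⟨σ, hs1, hs2⟩
    obtain ⟨W, u, v, huv, hcoeq⟩ := hstab q₁ q₂ hq₁ hq₂
    have hu : u = prod.lift (u ≫ prod.fst) (u ≫ prod.snd) := by ext <;> simp only [prod.lift_fst, prod.lift_snd]
    have hv : v = prod.lift (v ≫ prod.fst) (v ≫ prod.snd) := by ext <;> simp only [prod.lift_fst, prod.lift_snd]
    set u₁ := u ≫ prod.fst
    set u₂ := u ≫ prod.snd
    set v₁ := v ≫ prod.fst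
    set v₂ := v ≫ prod.snd
    have h1 : u₁ ≫ q₁ = v₁ ≫ q₁ := by
      have := congrArg (· ≫ prod.fst) huv
      simpa [u₁, v₁] using this
    have h2 : u₂ ≫ q₂ = v₂ ≫ q₂ := by
      have := congrArg (· ≫ prod.snd) huv
      simpa [u₂, v₂] using this
    have lift0 : ∀ {S : C} (a : S ⟶ A), prod.lift a (0 : S ⟶ B) ≫ σ = a ≫ (q₁ ≫ f) := by
      intro S a
      rw [show prod.lift a (0 : S ⟶ B) = a ≫ prod.lift (𝟙 A) 0 by
        rw [prod.comp_lift, Category.comp_id, comp_zero], Category.assoc, hs1]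
    have lift0' : ∀ {S : C} (b : S ⟶ B), prod.lift (0 : S ⟶ A) b ≫ σ = b ≫ (q₂ ≫ g) := by
      intro S b
      rw [show prod.lift (0 : S ⟶ A) b = b ≫ prod.lift 0 (𝟙 B) by
        rw [prod.comp_lift, Category.comp_id, comp_zero], Category.assoc, hs2]
    have stepA : prod.lift u₁ u₂ ≫ σ = prod.lift v₁ u₂ ≫ σ := by
      apply hC σ u₁ v₁ u₂
      rw [lift0, lift0, ← Category.assoc, ← Category.assoc, h1]
    have stepB : prod.lift v₁ u₂ ≫ σ = prod.lift v₁ v₂ ≫ σ := by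
      have sw : ∀ (a : W ⟶ A) (b : W ⟶ B),
          prod.lift b a ≫ ((prod.braiding B A).hom ≫ σ) = prod.lift a b ≫ σ := by
        intro a b
        rw [← Category.assoc]
        congr 1
        ext <;> simp only [Category.assoc, prod.braiding_hom, prod.lift_fst, prod.lift_snd]
      have := hC ((prod.braiding B A).hom ≫ σ) u₂ v₂ v₁ ?_
      · rw [sw, sw] at this; exact this
      · have e1 : prod.lift u₂ (0 : W ⟶ A) ≫ ((prod.braiding B A).hom ≫ σ)
            = prod.lift (0 : W ⟶ A) u₂ ≫ σ := by
          rw [← Category.assoc]; congr 1; ext <;> simp only [Category.assoc, prod.braiding_hom, prod.lift_fst, prod.lift_snd]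
        have e2 : prod.lift v₂ (0 : W ⟶ A) ≫ ((prod.braiding B A).hom ≫ σ)
            = prod.lift (0 : W ⟶ A) v₂ ≫ σ := by
          rw [← Category.assoc]; congr 1; ext <;> simp only [Category.assoc, prod.braiding_hom, prod.lift_fst, prod.lift_snd]
        rw [e1, e2, lift0', lift0', ← Category.assoc, ← Category.assoc, h2]
    have huσ : u ≫ σ = v ≫ σ := by
      rw [hu, hv, stepA, stepB]
    obtain ⟨ρ, hρ, -⟩ := hcoeq σ huσ
    refine ⟨ρ, ?_, ?_⟩
    · apply regEpi_epi hq₁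
      rw [← Category.assoc, prod.comp_lift, Category.comp_id, comp_zero]
      rw [show prod.lift q₁ (0 : A ⟶ Y) = prod.lift (𝟙 A) 0 ≫ prod.map q₁ q₂ by simp]
      rw [Category.assoc, hρ, hs1]
    · apply regEpi_epi hq₂
      rw [← Category.assoc, prod.comp_lift, Category.comp_id, comp_zero]
      rw [show prod.lift (0 : B ⟶ X) q₂ = prod.lift 0 (𝟙 B) ≫ prod.map q₁ q₂ by simp]
      rw [Category.assoc, hρ, hs2]
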